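/- In the braid group B_q, for 1 ≤ m ≤ q−1, the identity Π_{q-1}^{q-m} · Π_{q-2}^{q-m-1} ⋯ Π_{m+1}^2 · Π_m · Δ_{q-1}^{m+1} · Δ_{m-1} = Δ_{q-1} holds. -/

import Mathlib

/-- Defining relations for the braid group `B n` on `n` strands, with Artin
generators `σ_1, …, σ_{n-1}`.  Generators with index `0` or `≥ n` are killed,
so the presented group is exactly `B n`. -/
def braidRels (n : ℕ) : Set (FreeGroup ℕ) :=
  {r | (∃ i, 1 ≤ i ∧ i + 2 ≤ n ∧
        r = FreeGroup.of i * FreeGroup.of (i + 1) * FreeGroup.of i *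
            (FreeGroup.of (i + 1) * FreeGroup.of i * FreeGroup.of (i + 1))⁻¹) ∨
      (∃ i j, 1 ≤ i ∧ i + 2 ≤ j ∧ j + 1 ≤ n ∧
        r = FreeGroup.of i * FreeGroup.of j * (FreeGroup.of j * FreeGroup.of i)⁻¹) ∨
      (∃ i, (i = 0 ∨ n ≤ i) ∧ r = FreeGroup.of i)}

/-- The braid group on `n` strands. -/
def BraidGroup (n : ℕ) : Type := PresentedGroup (braidRels n)

instance (n : ℕ) : Group (BraidGroup n) := by unfold BraidGroup; infer_instance

/-- The Artin generator `σ_i` of `B n`. -/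
def sigma (n i : ℕ) : BraidGroup n := PresentedGroup.of i

/-- `Π_s^l = σ_l σ_{l+1} ⋯ σ_s`  (the identity when `s < l`). -/
def Pi' (n l s : ℕ) : BraidGroup n := ((List.range' l (s + 1 - l)).map (sigma n)).prod

/-- `Δ_s^l = Π_s^l Π_{s-1}^l ⋯ Π_l^l`  (the identity when `s < l`). -/
def Delta (n l s : ℕ) : BraidGroup n :=
  ((List.range (s + 1 - l)).map (fun k => Pi' n l (s - k))).prod

namespace BraidAux

lemma rel_one {n : ℕ} {r : FreeGroup ℕ} (h : r ∈ braidRels n) :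
    (PresentedGroup.mk (braidRels n) r : BraidGroup n) = 1 := by
  have : r ∈ Subgroup.normalClosure (braidRels n) := Subgroup.subset_normalClosure h
  exact (QuotientGroup.eq_one_iff r).mpr this

lemma rel_eq {n : ℕ} {x y : FreeGroup ℕ} (h : x * y⁻¹ ∈ braidRels n) :
    (PresentedGroup.mk (braidRels n) x : BraidGroup n) = PresentedGroup.mk (braidRels n) y := by
  have := rel_one h
  rw [map_mul, map_inv] at this
  exact mul_inv_eq_one.mp this

lemma sigma_eq (n i : ℕ) : sigma n i = PresentedGroup.mk (braidRels n) (FreeGroup.of i) := rfl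

lemma sigma_zero (n : ℕ) : sigma n 0 = 1 := by
  have : (FreeGroup.of 0 : FreeGroup ℕ) ∈ braidRels n := Or.inr (Or.inr ⟨0, Or.inl rfl, rfl⟩)
  exact rel_one this

lemma sigma_ge {n i : ℕ} (h : n ≤ i) : sigma n i = 1 := by
  have : (FreeGroup.of i : FreeGroup ℕ) ∈ braidRels n := Or.inr (Or.inr ⟨i, Or.inr h, rfl⟩)
  exact rel_one this

lemma sigma_braid {n i : ℕ} (h1 : 1 ≤ i) (h2 : i + 2 ≤ n) :
    sigma n i * sigma n (i+1) * sigma n i = sigma n (i+1) * sigma n i * sigma n (i+1) := by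
  have h : (FreeGroup.of i * FreeGroup.of (i+1) * FreeGroup.of i *
      (FreeGroup.of (i+1) * FreeGroup.of i * FreeGroup.of (i+1))⁻¹ : FreeGroup ℕ) ∈ braidRels n :=
    Or.inl ⟨i, h1, h2, rfl⟩
  have := rel_eq h
  simp only [map_mul] at this; exact this

lemma sigma_comm {n i j : ℕ} (h : i + 2 ≤ j) :
    sigma n i * sigma n j = sigma n j * sigma n i := by
  rcases Nat.eq_zero_or_pos i with hi | hi
  · subst hi; rw [sigma_zero]; simp
  rcases le_or_gt n j with hj | hj
  · rw [sigma_ge hj]; simp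
  · have hmem : (FreeGroup.of i * FreeGroup.of j *
        (FreeGroup.of j * FreeGroup.of i)⁻¹ : FreeGroup ℕ) ∈ braidRels n :=
      Or.inr (Or.inl ⟨i, j, hi, h, hj, rfl⟩)
    have := rel_eq hmem
    simp only [map_mul] at this; exact this

end BraidAux

namespace BraidAux

lemma Pi'_nil {n l s : ℕ} (h : s < l) : Pi' n l s = 1 := by
  unfold Pi'
  rw [show s + 1 - l = 0 by omega]
  simp

lemma Pi'_succ {n l s : ℕ} (h : l ≤ s + 1) :
    Pi' n l (s + 1) = Pi' n l s * sigma n (s + 1) := by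
  unfold Pi'
  rw [show s + 1 + 1 - l = (s + 1 - l) + 1 by omega, List.range'_concat,
    List.map_append, List.prod_append, show l + 1 * (s + 1 - l) = s + 1 by omega]
  simp

lemma Pi'_single (n l : ℕ) : Pi' n l l = sigma n l := by
  unfold Pi'
  rw [show l + 1 - l = 1 by omega]
  simp

lemma Pi'_split {n l m s : ℕ} (h1 : l ≤ m + 1) (h2 : m ≤ s) :
    Pi' n l s = Pi' n l m * Pi' n (m + 1) s := by
  unfold Pi'
  rw [show s + 1 - l = (m + 1 - l) + (s - m) by omega, ← List.range'_append_1,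
    show l + (m + 1 - l) = m + 1 by omega, show s - m = s + 1 - (m + 1) by omega,
    List.map_append, List.prod_append]

end BraidAux

namespace BraidAux

lemma sigma_comm_Pi {n j : ℕ} : ∀ {s l : ℕ}, s + 2 ≤ j →
    Pi' n l s * sigma n j = sigma n j * Pi' n l s := by
  intro s
  induction s with
  | zero =>
    intro l h
    rcases Nat.lt_or_ge 0 l with hl | hl
    · rw [Pi'_nil hl]; simp
    · rw [show l = 0 by omega, Pi'_single]
      exact sigma_comm h
  | succ s ih =>
    intro l h
    rcases Nat.lt_or_ge (s + 1) l with hl | hl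
    · rw [Pi'_nil hl]; simp
    · rw [Pi'_succ hl, mul_assoc, sigma_comm (by omega : s + 1 + 2 ≤ j), ← mul_assoc,
        ih (by omega), mul_assoc]

lemma shift {n : ℕ} : ∀ {s l i : ℕ}, 1 ≤ i → l ≤ i → i < s → s + 1 ≤ n →
    Pi' n l s * sigma n i = sigma n (i + 1) * Pi' n l s := by
  intro s
  induction s with
  | zero => intro l i _ _ h3 _; omega
  | succ s ih =>
    intro l i h1 h2 h3 h4
    rcases Nat.lt_or_ge i s with hlt | hge
    · -- i < s : peel rightmost generator
      rw [Pi'_succ (by omega), mul_assoc, ← sigma_comm (by omega : i + 2 ≤ s + 1),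
        ← mul_assoc, ih h1 h2 hlt (by omega), mul_assoc]
    · -- i = s
      have hi : i = s := by omega
      subst hi
      have hsplit : Pi' n l (i + 1) = Pi' n l (i - 1) * Pi' n i (i + 1) := by
        rw [Pi'_split (show l ≤ (i-1) + 1 by omega) (show i - 1 ≤ i + 1 by omega),
          show i - 1 + 1 = i by omega]
      have hPi2 : Pi' n i (i + 1) = sigma n i * sigma n (i + 1) := by
        rw [Pi'_succ (by omega), Pi'_single]
      rw [hsplit, hPi2]
      calc Pi' n l (i - 1) * (sigma n i * sigma n (i + 1)) * sigma n i
          = Pi' n l (i - 1) * (sigma n i * sigma n (i + 1) * sigma n i) := by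
            rw [mul_assoc]
        _ = Pi' n l (i - 1) * (sigma n (i + 1) * sigma n i * sigma n (i + 1)) := by
            rw [sigma_braid h1 (by omega)]
        _ = Pi' n l (i - 1) * sigma n (i + 1) * (sigma n i * sigma n (i + 1)) := by
            simp only [mul_assoc]
        _ = sigma n (i + 1) * Pi' n l (i - 1) * (sigma n i * sigma n (i + 1)) := by
            rw [sigma_comm_Pi (show i - 1 + 2 ≤ i + 1 by omega)]
        _ = sigma n (i + 1) * (Pi' n l (i - 1) * (sigma n i * sigma n (i + 1))) := by
            rw [mul_assoc]

lemma shift_Pi {n s : ℕ} (h4 : s + 1 ≤ n) : ∀ {s' l' : ℕ}, 1 ≤ l' → s' < s →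
    Pi' n 1 s * Pi' n l' s' = Pi' n (l' + 1) (s' + 1) * Pi' n 1 s := by
  intro s'
  induction s' with
  | zero =>
    intro l' h1 h2
    rw [Pi'_nil (show (0:ℕ) < l' by omega), Pi'_nil (show (0:ℕ)+1 < l'+1 by omega)]; simp
  | succ s' ih =>
    intro l' h1 h2
    rcases Nat.lt_or_ge (s' + 1) l' with hl | hl
    · rw [Pi'_nil hl, Pi'_nil (show s'+1+1 < l'+1 by omega)]; simp
    · rw [Pi'_succ hl, ← mul_assoc, ih h1 (by omega), mul_assoc,
        shift (by omega) (by omega) (by omega) h4, ← mul_assoc,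
        ← Pi'_succ (by omega)]

lemma Delta_nil {n l s : ℕ} (h : s < l) : Delta n l s = 1 := by
  unfold Delta
  rw [show s + 1 - l = 0 by omega]
  simp

lemma Delta_succ {n l s : ℕ} (h : l ≤ s + 1) :
    Delta n l (s + 1) = Pi' n l (s + 1) * Delta n l s := by
  unfold Delta
  rw [show s + 1 + 1 - l = (s + 1 - l) + 1 by omega, List.range_succ_eq_map]
  simp only [List.map_cons, List.prod_cons, List.map_map, Nat.sub_zero]
  congr 1
  congr 1
  refine List.map_congr_left (fun k _ => ?_)
  simp only [Function.comp_apply]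
  congr 1
  omega

lemma shift_prod {n s : ℕ} (f f' : ℕ → BraidGroup n) :
    ∀ t : ℕ, (∀ j < t, Pi' n 1 s * f j = f' j * Pi' n 1 s) →
    Pi' n 1 s * ((List.range t).map f).prod = ((List.range t).map f').prod * Pi' n 1 s := by
  intro t
  induction t with
  | zero => simp
  | succ t ih =>
    intro h
    rw [List.range_succ, List.map_append, List.map_append, List.prod_append, List.prod_append]
    simp only [List.map_cons, List.map_nil, List.prod_cons, List.prod_nil, mul_one]
    rw [← mul_assoc, ih (fun j hj => h j (by omega)), mul_assoc, h t (by omega), ← mul_assoc]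

end BraidAux

namespace BraidAux

lemma Delta_peel {n l s : ℕ} (h1 : 1 ≤ s) (h2 : l ≤ s) :
    Delta n l s = Pi' n l s * Delta n l (s - 1) := by
  conv_lhs => rw [show s = s - 1 + 1 by omega]
  rw [Delta_succ (by omega), show s - 1 + 1 = s by omega]

lemma main (n m : ℕ) (hm : 1 ≤ m) (k : ℕ) (hk : 1 ≤ k) : m + k ≤ n →
    ((List.range k).map (fun j => Pi' n (k - j) (m + k - 1 - j))).prod *
      (Delta n (m + 1) (m + k - 1) * Delta n 1 (m - 1)) = Delta n 1 (m + k - 1) := by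
  induction k, hk using Nat.le_induction with
  | base =>
    intro hn
    simp only [Nat.add_sub_cancel]
    rw [Delta_nil (show m < m + 1 by omega), one_mul]
    simp only [List.range_succ, List.range_zero, List.map_append, List.map_cons, List.map_nil,
      List.prod_append, List.prod_cons, List.prod_nil, mul_one, one_mul, Nat.sub_zero,
      Nat.add_sub_cancel]
    rw [← Delta_peel hm hm]
  | succ k hk ih =>
    intro hn
    simp only [show m + (k + 1) - 1 = m + k from by omega]
    have hIH := ih (by omega)
    have h1 : Delta n 1 (m + k) = Pi' n 1 (m + k) * Delta n 1 (m + k - 1) :=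
      Delta_peel (by omega) (by omega)
    have hshift : Pi' n 1 (m + k) *
        ((List.range k).map (fun j => Pi' n (k - j) (m + k - 1 - j))).prod =
        ((List.range k).map (fun j => Pi' n (k + 1 - j) (m + k - j))).prod * Pi' n 1 (m + k) := by
      apply shift_prod
      intro j hj
      rw [show k + 1 - j = (k - j) + 1 by omega, show m + k - j = (m + k - 1 - j) + 1 by omega]
      exact shift_Pi (by omega) (by omega) (by omega)
    have hsplit : Pi' n 1 (m + k) = Pi' n 1 m * Pi' n (m + 1) (m + k) :=
      Pi'_split (by omega) (by omega)
    have hpeel : Delta n (m + 1) (m + k) = Pi' n (m + 1) (m + k) * Delta n (m + 1) (m + k - 1) :=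
      Delta_peel (by omega) (by omega)
    have hL : ((List.range (k + 1)).map (fun j => Pi' n (k + 1 - j) (m + k - j))).prod =
        ((List.range k).map (fun j => Pi' n (k + 1 - j) (m + k - j))).prod * Pi' n 1 m := by
      rw [List.range_succ, List.map_append, List.prod_append]
      simp only [List.map_cons, List.map_nil, List.prod_cons, List.prod_nil, mul_one]
      rw [show k + 1 - k = 1 by omega, show m + k - k = m by omega]
    rw [hL, hpeel, h1, ← hIH, ← mul_assoc (Pi' n 1 (m + k)), hshift, hsplit]
    simp only [mul_assoc]

end BraidAux


theorem stmt14 (q m : ℕ) (hm : 1 ≤ m) (hmq : m ≤ q - 1) :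
    ((List.range (q - m)).map (fun j => Pi' q (q - m - j) (q - 1 - j))).prod * (Delta q (m + 1) (q - 1) * Delta q 1 (m - 1)) = Delta q 1 (q - 1) := by
  have h := BraidAux.main q m hm (q - m) (by omega) (by omega)
  simpa only [show m + (q - m) = q from by omega] using h
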